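/- Let R be a symmetric positive definite n×n real matrix, X a real n×q matrix such that XᵀR⁻¹X is positive definite, r ∈ ℝⁿ, f ∈ ℝ^q, and r₀₀ ∈ ℝ such that the (n+1)×(n+1) block matrix with top-left entry r₀₀, top-right block rᵀ, bottom-left block r, and bottom-right block R is positive semidefinite. Then c* := r₀₀ − rᵀR⁻¹r + (f − XᵀR⁻¹r)ᵀ(XᵀR⁻¹X)⁻¹(f − XᵀR⁻¹r) satisfies c* ≥ r₀₀ − rᵀR⁻¹r ≥ 0; in particular the universal (co)kriging variance factor c* is nonnegative and dominates the simple kriging variance factor r₀₀ − rᵀR⁻¹r (variance inequality of Corollary 3.4). -/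

import Mathlib

open Matrix

/-- The universal (co)kriging variance factor
`c* = r₀₀ − rᵀR⁻¹r + (f − XᵀR⁻¹r)ᵀ(XᵀR⁻¹X)⁻¹(f − XᵀR⁻¹r)` satisfies
`c* ≥ r₀₀ − rᵀR⁻¹r ≥ 0`, provided the extended correlation matrix
`[[r₀₀, rᵀ], [r, R]]` is positive semidefinite. -/
theorem cokriging_variance_inequality {n q : ℕ}
    (R : Matrix (Fin n) (Fin n) ℝ) (X : Matrix (Fin n) (Fin q) ℝ)
    (r : Fin n → ℝ) (f : Fin q → ℝ) (r00 : ℝ)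
    (hR : R.PosDef) (hM : (Xᵀ * R⁻¹ * X).PosDef)
    (hblock : (Matrix.fromBlocks
        (Matrix.of fun (_ : Unit) (_ : Unit) => r00)
        (Matrix.of fun (_ : Unit) j => r j)
        (Matrix.of fun i (_ : Unit) => r i) R).PosSemidef) :
    r00 - r ⬝ᵥ (R⁻¹ *ᵥ r) ≤
      r00 - r ⬝ᵥ (R⁻¹ *ᵥ r) +
        (f - Xᵀ *ᵥ (R⁻¹ *ᵥ r)) ⬝ᵥ ((Xᵀ * R⁻¹ * X)⁻¹ *ᵥ (f - Xᵀ *ᵥ (R⁻¹ *ᵥ r))) ∧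
    0 ≤ r00 - r ⬝ᵥ (R⁻¹ *ᵥ r) := by
  constructor
  · have h := (hM.inv.posSemidef.dotProduct_mulVec_nonneg (f - Xᵀ *ᵥ (R⁻¹ *ᵥ r)))
    simp only [star_trivial] at h
    linarith
  · haveI := hR.1
    haveI : Invertible R := hR.isUnit.invertible
    have hB : (Matrix.of fun i (_ : Unit) => r i)
        = (Matrix.of fun (_ : Unit) j => r j)ᴴ := by
      ext i j; simp [conjTranspose]
    rw [hB] at hblock
    rw [Matrix.PosDef.fromBlocks₂₂ _ _ hR] at hblock
    have h := hblock.dotProduct_mulVec_nonneg (fun _ => 1)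
    simp only [star_trivial, Matrix.mulVec, dotProduct, Matrix.sub_apply, Pi.star_apply,
      Matrix.mul_apply, Matrix.of_apply, Fintype.sum_unique, conjTranspose_apply,
      star_trivial, mul_one, one_mul] at h
    have e : r ⬝ᵥ R⁻¹ *ᵥ r = ∑ x : Fin n, (∑ x_1 : Fin n, r x_1 * R⁻¹ x_1 x) * r x := by
      simp only [dotProduct, Matrix.mulVec, Finset.sum_mul, Finset.mul_sum]
      rw [Finset.sum_comm]
      apply Finset.sum_congr rfl; intro i _
      apply Finset.sum_congr rfl; intro j _
      have hs := hR.1.inv.apply j i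
      simp only [star_trivial] at hs
      ring
    rw [e]; exact h
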